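/- arXiv:2106.00917 — 2 statements merged into one kernel-verified Lean document; each statement's English description precedes it below -/
import Mathlib

section
/- Let ν ∈ (0,1/2), let a < b be real numbers, and let u, v ∈ L²(ℝ) be real-valued functions vanishing outside [a,b]. Then ∫_a^b ({}_a∂_x^{-ν}u)(x) · ({}_x∂_b^{-ν}v)(x) dx + ∫_a^b ({}_a∂_x^{-ν}v)(x) · ({}_x∂_b^{-ν}u)(x) dx = (1/Γ(2ν)) · ∫_a^b ∫_a^b u(ξ) v(η) |η-ξ|^{2ν-1} dη dξ. -/
open MeasureTheory

/-- Left-sided Riemann–Liouville fractional integral of order `ν` with base point `a`. -/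
noncomputable def RLleft (ν a : ℝ) (u : ℝ → ℝ) (x : ℝ) : ℝ :=
  (1 / Real.Gamma ν) * ∫ ξ in a..x, (x - ξ) ^ (ν - 1) * u ξ

/-- Right-sided Riemann–Liouville fractional integral of order `ν` with base point `b`. -/
noncomputable def RLright (ν b : ℝ) (u : ℝ → ℝ) (x : ℝ) : ℝ :=
  (1 / Real.Gamma ν) * ∫ ξ in x..b, (ξ - x) ^ (ν - 1) * u ξ

open Set
open scoped ENNReal NNReal

lemma beta01_integrable {ν : ℝ} (hν : 0 < ν) (hν1 : ν < 1) :
    IntervalIntegrable (fun t : ℝ => t ^ (ν - 1) * (1 - t) ^ (ν - 1)) volume 0 1 := by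
  have h := (Complex.betaIntegral_convergent (u := (ν : ℂ)) (v := (ν : ℂ))
    (by simpa using hν) (by simpa using hν)).norm
  refine h.congr_ae ?_
  have h01 : Set.uIoc (0:ℝ) 1 = Set.Ioc 0 1 := Set.uIoc_of_le (by norm_num)
  rw [h01]
  filter_upwards [ae_restrict_mem measurableSet_Ioc] with x hx
  have hx0 : 0 < x := hx.1
  have hx1 : 0 ≤ 1 - x := by linarith [hx.2]
  have hre : ((ν : ℂ) - 1).re = ν - 1 := by simp
  rw [norm_mul,
    Complex.norm_cpow_eq_rpow_re_of_pos hx0,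
    show ((1 : ℂ) - (x:ℂ)) = ((1 - x : ℝ) : ℂ) by push_cast; ring,
    Complex.norm_cpow_eq_rpow_re_of_nonneg hx1 (by rw [hre]; intro h; linarith), hre]

lemma beta01_value {ν : ℝ} (hν : 0 < ν) (hν1 : ν < 1) :
    ∫ t in (0:ℝ)..1, t ^ (ν - 1) * (1 - t) ^ (ν - 1)
      = Real.Gamma ν * Real.Gamma ν / Real.Gamma (2 * ν) := by
  have h2ν : 0 < Real.Gamma (2 * ν) := Real.Gamma_pos_of_pos (by linarith)
  have key : Complex.Gamma ν * Complex.Gamma ν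
      = Complex.Gamma ((ν : ℂ) + ν) * Complex.betaIntegral ν ν :=
    Complex.Gamma_mul_Gamma_eq_betaIntegral (by simpa using hν) (by simpa using hν)
  have hbeta : Complex.betaIntegral ν ν
      = ((∫ t in (0:ℝ)..1, t ^ (ν - 1) * (1 - t) ^ (ν - 1) : ℝ) : ℂ) := by
    rw [Complex.betaIntegral, ← intervalIntegral.integral_ofReal]
    refine intervalIntegral.integral_congr fun x hx => ?_
    rw [Set.uIcc_of_le (by norm_num : (0:ℝ) ≤ 1)] at hx
    have hx0 : (0:ℝ) ≤ x := hx.1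
    have hx1 : (0:ℝ) ≤ 1 - x := by linarith [hx.2]
    rw [Complex.ofReal_mul, Complex.ofReal_cpow hx0, Complex.ofReal_cpow hx1]
    push_cast
    ring
  rw [hbeta] at key
  have hsum : ((ν : ℂ) + ν) = ((2 * ν : ℝ) : ℂ) := by push_cast; ring
  rw [hsum, Complex.Gamma_ofReal, Complex.Gamma_ofReal, ← Complex.ofReal_mul,
    ← Complex.ofReal_mul] at key
  have := Complex.ofReal_injective key
  field_simp at this ⊢
  linarith [this]


lemma kernel_ptwise {ν ξ η c : ℝ} (hc : 0 < c) (hcdef : c = η - ξ) {x : ℝ}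
    (hx1 : ξ ≤ x) (hx2 : x ≤ η) :
    (x - ξ) ^ (ν - 1) * (η - x) ^ (ν - 1)
      = c ^ (2*ν-2) * ((c⁻¹ * (x - ξ)) ^ (ν - 1) * (1 - c⁻¹ * (x - ξ)) ^ (ν - 1)) := by
  have hA : 0 ≤ c⁻¹ * (x - ξ) := mul_nonneg (by positivity) (by linarith)
  have hB : 0 ≤ 1 - c⁻¹ * (x - ξ) := by
    rw [sub_nonneg, inv_mul_le_iff₀ hc, mul_one]; linarith
  have key1 : (x - ξ) ^ (ν - 1) = c ^ (ν-1) * (c⁻¹ * (x - ξ)) ^ (ν - 1) := by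
    rw [← Real.mul_rpow hc.le hA]; congr 1; field_simp
  have key2 : (η - x) ^ (ν - 1) = c ^ (ν-1) * (1 - c⁻¹ * (x - ξ)) ^ (ν - 1) := by
    rw [← Real.mul_rpow hc.le hB]; congr 1; field_simp; linarith
  have hcc : c ^ (ν-1) * c ^ (ν-1) = c ^ (2*ν-2) := by
    rw [← Real.rpow_add hc]; ring_nf
  rw [key1, key2, ← hcc]; ring

lemma kernel_integrable {ν : ℝ} (hν : 0 < ν) (hν1 : ν < 1) {ξ η : ℝ} (h : ξ < η) :
    IntervalIntegrable (fun x => (x - ξ) ^ (ν - 1) * (η - x) ^ (ν - 1)) volume ξ η := by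
  have hc : (0:ℝ) < η - ξ := by linarith
  set c := η - ξ with hcdef
  have I3 := ((beta01_integrable hν hν1).comp_mul_left (c := c⁻¹)).comp_sub_right ξ
  rw [show (0:ℝ) / c⁻¹ + ξ = ξ by simp, show (1:ℝ) / c⁻¹ + ξ = η by
    rw [one_div, inv_inv, hcdef]; ring] at I3
  have I4 := I3.const_mul (c ^ (2*ν - 2))
  refine I4.congr_ae ?_
  rw [Set.uIoc_of_le h.le]
  filter_upwards [ae_restrict_mem measurableSet_Ioc] with x hx
  exact (kernel_ptwise hc hcdef hx.1.le hx.2).symm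

lemma kernel_value {ν : ℝ} (hν : 0 < ν) (hν1 : ν < 1) {ξ η : ℝ} (h : ξ < η) :
    ∫ x in ξ..η, (x - ξ) ^ (ν - 1) * (η - x) ^ (ν - 1)
      = (η - ξ) ^ (2*ν - 1) * (Real.Gamma ν * Real.Gamma ν / Real.Gamma (2 * ν)) := by
  have hc : (0:ℝ) < η - ξ := by linarith
  set c := η - ξ with hcdef
  have hcomp := intervalIntegral.integral_comp_mul_add
    (f := fun x => (x - ξ) ^ (ν - 1) * (η - x) ^ (ν - 1)) (a := (0:ℝ)) (b := 1)
    (c := c) (d := ξ) (ne_of_gt hc)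
  rw [show c * 0 + ξ = ξ by ring, show c * 1 + ξ = η by rw [hcdef]; ring] at hcomp
  have hind : ∫ t in (0:ℝ)..1, (c * t + ξ - ξ) ^ (ν - 1) * (η - (c * t + ξ)) ^ (ν - 1)
      = c ^ (2*ν-2) * (Real.Gamma ν * Real.Gamma ν / Real.Gamma (2 * ν)) := by
    rw [show (fun t : ℝ => (c * t + ξ - ξ) ^ (ν - 1) * (η - (c * t + ξ)) ^ (ν - 1))
        = fun t : ℝ => ((c * t + ξ) - ξ) ^ (ν - 1) * (η - (c * t + ξ)) ^ (ν - 1) by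
      funext t; ring_nf]
    have : ∀ t ∈ Set.uIcc (0:ℝ) 1,
        ((c * t + ξ) - ξ) ^ (ν - 1) * (η - (c * t + ξ)) ^ (ν - 1)
          = c ^ (2*ν-2) * (t ^ (ν - 1) * (1 - t) ^ (ν - 1)) := by
      intro t ht
      rw [Set.uIcc_of_le (by norm_num : (0:ℝ) ≤ 1)] at ht
      have h1 : ξ ≤ c * t + ξ := by nlinarith [ht.1, hc.le]
      have h2 : c * t + ξ ≤ η := by nlinarith [ht.2, hc.le]
      rw [kernel_ptwise hc hcdef h1 h2]
      congr 2 <;> rw [show c * t + ξ - ξ = c * t by ring] <;>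
        rw [inv_mul_cancel_left₀ (ne_of_gt hc)]
    rw [intervalIntegral.integral_congr this, intervalIntegral.integral_const_mul,
      beta01_value hν hν1]
  rw [hind] at hcomp
  -- hcomp : ... = c⁻¹ • (∫ x in ξ..η, ...)  -- direction?
  have := hcomp
  rw [smul_eq_mul] at this
  have hint : ∫ x in ξ..η, (x - ξ) ^ (ν - 1) * (η - x) ^ (ν - 1)
      = c * (c ^ (2*ν-2) * (Real.Gamma ν * Real.Gamma ν / Real.Gamma (2 * ν))) := by
    field_simp at this ⊢
    linarith [this]
  rw [hint, ← mul_assoc]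
  congr 1
  rw [show c * c ^ (2*ν-2) = c ^ (1:ℝ) * c ^ (2*ν-2) by rw [Real.rpow_one],
    ← Real.rpow_add hc]
  ring_nf


lemma absker_integrable {s L : ℝ} (hs : -1 < s) (hL : 0 ≤ L) :
    IntervalIntegrable (fun t : ℝ => |t| ^ s) volume (-L) L := by
  have h1 : IntervalIntegrable (fun t : ℝ => |t| ^ s) volume 0 L := by
    refine (intervalIntegral.intervalIntegrable_rpow' hs).congr_ae ?_
    rw [Set.uIoc_of_le hL]
    filter_upwards [ae_restrict_mem measurableSet_Ioc] with t ht
    rw [abs_of_pos ht.1]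
  have h2 : IntervalIntegrable (fun t : ℝ => |t| ^ s) volume (-L) 0 := by
    have := h1.comp_mul_left (c := -1)
    simp only [neg_mul, one_mul, abs_neg] at this
    rw [show (0:ℝ) / (-1) = 0 by norm_num, show L / (-1) = -L by ring] at this
    exact this.symm
  exact h2.trans h1

lemma absker_value {s L : ℝ} (hs : -1 < s) (hs0 : s + 1 ≠ 0) (hL : 0 ≤ L) :
    ∫ t in (-L)..L, |t| ^ s = 2 * (L ^ (s+1) / (s+1)) := by
  have h1 : IntervalIntegrable (fun t : ℝ => |t| ^ s) volume 0 L := by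
    refine (intervalIntegral.intervalIntegrable_rpow' hs).congr_ae ?_
    rw [Set.uIoc_of_le hL]
    filter_upwards [ae_restrict_mem measurableSet_Ioc] with t ht
    rw [abs_of_pos ht.1]
  have h2 : IntervalIntegrable (fun t : ℝ => |t| ^ s) volume (-L) 0 := by
    have := h1.comp_mul_left (c := -1)
    simp only [neg_mul, one_mul, abs_neg] at this
    rw [show (0:ℝ) / (-1) = 0 by norm_num, show L / (-1) = -L by ring] at this
    exact this.symm
  have hval : ∫ t in (0:ℝ)..L, |t| ^ s = L ^ (s+1) / (s+1) := by
    have : ∫ t in (0:ℝ)..L, |t| ^ s = ∫ t in (0:ℝ)..L, t ^ s := by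
      refine intervalIntegral.integral_congr fun t ht => ?_
      rw [Set.uIcc_of_le hL] at ht
      rcases eq_or_lt_of_le ht.1 with h | h
      · rw [← h, abs_zero]
      · rw [abs_of_pos h]
    rw [this, integral_rpow (Or.inl hs), Real.zero_rpow hs0, sub_zero]
  have hneg : ∫ t in (-L)..(0:ℝ), |t| ^ s = L ^ (s+1) / (s+1) := by
    have : ∫ t in (-L)..(0:ℝ), |t| ^ s = ∫ t in (-L)..(0:ℝ), |(-t)| ^ s := by
      refine intervalIntegral.integral_congr fun t _ => ?_
      rw [abs_neg]
    rw [this, intervalIntegral.integral_comp_neg (fun t => |t| ^ s), neg_zero, neg_neg, hval]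
  rw [← intervalIntegral.integral_add_adjacent_intervals h2 h1, hval, hneg]
  ring

lemma slice_bound {ν a b : ℝ} (hν : ν ∈ Set.Ioo (0 : ℝ) (1/2)) (hab : a < b)
    {ξ : ℝ} (hξ : ξ ∈ Set.Ioc a b) :
    ∫⁻ η in Set.Ioc a b, ENNReal.ofReal (|η - ξ| ^ (2*ν - 1))
      ≤ ENNReal.ofReal (2 * ((b-a) ^ (2*ν) / (2*ν))) := by
  obtain ⟨hν0, hν2⟩ := hν
  set s := 2*ν - 1 with hsdef
  have hs : -1 < s := by simp only [hsdef]; linarith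
  have hs0 : s + 1 ≠ 0 := by simp only [hsdef]; intro h; linarith
  set L := b - a with hL
  have hL0 : 0 ≤ L := by simp only [hL]; linarith
  have hsub : Set.Ioc a b ⊆ Set.Ioc (ξ - L) (ξ + L) := by
    intro η hη
    constructor
    · have : ξ - L ≤ a := by simp only [hL]; linarith [hξ.2]
      linarith [hη.1]
    · have : b ≤ ξ + L := by simp only [hL]; linarith [hξ.1]
      linarith [hη.2]
  refine le_trans (lintegral_mono_set hsub) ?_
  have hInt : IntegrableOn (fun η => |η - ξ| ^ s) (Set.Ioc (ξ - L) (ξ + L)) volume := by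
    have := (absker_integrable hs hL0).comp_sub_right ξ
    rw [show -L + ξ = ξ - L by ring, show L + ξ = ξ + L by ring] at this
    exact (intervalIntegrable_iff_integrableOn_Ioc_of_le (by linarith)).mp this
  have hnn : 0 ≤ᵐ[volume.restrict (Set.Ioc (ξ-L) (ξ+L))] fun η => |η - ξ| ^ s :=
    Filter.Eventually.of_forall fun η => Real.rpow_nonneg (abs_nonneg _) _
  rw [← ofReal_integral_eq_lintegral_ofReal hInt hnn]
  apply ENNReal.ofReal_le_ofReal
  have : ∫ η in Set.Ioc (ξ - L) (ξ + L), |η - ξ| ^ s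
      = ∫ η in (ξ - L)..(ξ + L), |η - ξ| ^ s := by
    rw [intervalIntegral.integral_of_le (by linarith)]
  rw [this, intervalIntegral.integral_comp_sub_right (fun t => |t| ^ s) ξ,
    show ξ - L - ξ = -L by ring, show ξ + L - ξ = L by ring,
    absker_value hs hs0 hL0, show s + 1 = 2*ν by simp [hsdef]]


lemma sq_lintegral_lt_top {u : ℝ → ℝ} (hu : MemLp u 2 (volume : Measure ℝ)) :
    ∫⁻ x, (‖u x‖₊ : ℝ≥0∞)^2 ∂(volume : Measure ℝ) < ⊤ := by
  have h := hu.integrable_sq.hasFiniteIntegral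
  rw [hasFiniteIntegral_iff_norm] at h
  refine lt_of_eq_of_lt (lintegral_congr fun x => ?_) h
  rw [ofReal_norm, enorm_eq_nnnorm, ← ENNReal.coe_pow, nnnorm_pow]

lemma mul_le_sq_add_sq (x y : ℝ≥0∞) : x * y ≤ x^2 + y^2 := by
  rcases le_total x y with h | h
  · calc x * y ≤ y * y := mul_le_mul_left h y
    _ = y^2 := (sq y).symm
    _ ≤ x^2 + y^2 := le_add_self
  · calc x * y ≤ x * x := mul_le_mul_right h x
    _ = x^2 := (sq x).symm
    _ ≤ x^2 + y^2 := le_self_add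

lemma master_fin {ν a b : ℝ} (hν : ν ∈ Set.Ioo (0 : ℝ) (1/2)) (hab : a < b)
    {u v : ℝ → ℝ} (hum : Measurable u) (hvm : Measurable v)
    (hu : MemLp u 2 (volume : Measure ℝ)) (hv : MemLp v 2 (volume : Measure ℝ)) :
    ∫⁻ p in Set.Ioc a b ×ˢ Set.Ioc a b,
        (‖u p.1‖₊ : ℝ≥0∞) * (‖v p.2‖₊ : ℝ≥0∞) * ENNReal.ofReal (|p.2 - p.1| ^ (2*ν - 1))
        ∂(volume : Measure (ℝ × ℝ)) < ⊤ := by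
  set s := 2*ν - 1 with hsdef
  set C₀ : ℝ≥0∞ := ENNReal.ofReal (2 * ((b-a) ^ (2*ν) / (2*ν))) with hC₀
  have hC₀top : C₀ ≠ ⊤ := ENNReal.ofReal_ne_top
  have hker0 : Measurable fun t : ℝ => |t| ^ s := by measurability
  have hker : Measurable fun p : ℝ × ℝ => ENNReal.ofReal (|p.2 - p.1| ^ s) :=
    (hker0.comp (measurable_snd.sub measurable_fst)).ennreal_ofReal
  have hbound : ∀ p : ℝ × ℝ,
      (‖u p.1‖₊ : ℝ≥0∞) * (‖v p.2‖₊ : ℝ≥0∞) * ENNReal.ofReal (|p.2 - p.1| ^ s)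
        ≤ ((‖u p.1‖₊ : ℝ≥0∞)^2 + (‖v p.2‖₊ : ℝ≥0∞)^2) * ENNReal.ofReal (|p.2 - p.1| ^ s) :=
    fun p => mul_le_mul_left (mul_le_sq_add_sq _ _) _
  have hrp : (volume : Measure (ℝ × ℝ)).restrict (Set.Ioc a b ×ˢ Set.Ioc a b)
      = ((volume : Measure ℝ).restrict (Set.Ioc a b)).prod
          ((volume : Measure ℝ).restrict (Set.Ioc a b)) := by
    rw [Measure.volume_eq_prod, Measure.prod_restrict]
  refine lt_of_le_of_lt (lintegral_mono hbound) ?_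
  have hsplit : ∀ p : ℝ × ℝ,
      ((‖u p.1‖₊ : ℝ≥0∞)^2 + (‖v p.2‖₊ : ℝ≥0∞)^2) * ENNReal.ofReal (|p.2 - p.1| ^ s)
        = (‖u p.1‖₊ : ℝ≥0∞)^2 * ENNReal.ofReal (|p.2 - p.1| ^ s)
          + (‖v p.2‖₊ : ℝ≥0∞)^2 * ENNReal.ofReal (|p.2 - p.1| ^ s) := fun p => add_mul _ _ _
  have hmu : Measurable fun p : ℝ × ℝ => (‖u p.1‖₊ : ℝ≥0∞)^2 * ENNReal.ofReal (|p.2 - p.1| ^ s) :=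
    (((hum.comp measurable_fst : Measurable fun p : ℝ × ℝ => u p.1).nnnorm.coe_nnreal_ennreal).pow_const 2).mul hker
  have hmv : Measurable fun p : ℝ × ℝ => (‖v p.2‖₊ : ℝ≥0∞)^2 * ENNReal.ofReal (|p.2 - p.1| ^ s) :=
    (((hvm.comp measurable_snd : Measurable fun p : ℝ × ℝ => v p.2).nnnorm.coe_nnreal_ennreal).pow_const 2).mul hker
  rw [lintegral_congr hsplit, lintegral_add_left hmu]
  have hu2 : ∫⁻ p in Set.Ioc a b ×ˢ Set.Ioc a b,
      (‖u p.1‖₊ : ℝ≥0∞)^2 * ENNReal.ofReal (|p.2 - p.1| ^ s)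
      ∂(volume : Measure (ℝ × ℝ)) < ⊤ := by
    rw [hrp, lintegral_prod _ hmu.aemeasurable]
    have hinner : ∀ ξ : ℝ, ξ ∈ Set.Ioc a b →
        ∫⁻ η in Set.Ioc a b, (‖u ξ‖₊ : ℝ≥0∞)^2 * ENNReal.ofReal (|η - ξ| ^ s)
          ≤ (‖u ξ‖₊ : ℝ≥0∞)^2 * C₀ := by
      intro ξ hξ
      rw [lintegral_const_mul' _ _ (by simp)]
      exact mul_le_mul_right (slice_bound hν hab hξ) _
    calc ∫⁻ ξ in Set.Ioc a b, ∫⁻ η in Set.Ioc a b,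
          (‖u ξ‖₊ : ℝ≥0∞)^2 * ENNReal.ofReal (|η - ξ| ^ s)
        ≤ ∫⁻ ξ in Set.Ioc a b, (‖u ξ‖₊ : ℝ≥0∞)^2 * C₀ :=
          setLIntegral_mono ((hum.nnnorm.coe_nnreal_ennreal.pow_const 2).mul_const _) hinner
      _ ≤ ∫⁻ ξ, (‖u ξ‖₊ : ℝ≥0∞)^2 * C₀ := setLIntegral_le_lintegral _ _
      _ = (∫⁻ ξ, (‖u ξ‖₊ : ℝ≥0∞)^2) * C₀ := lintegral_mul_const' _ _ hC₀top
      _ < ⊤ := ENNReal.mul_lt_top (sq_lintegral_lt_top hu) (lt_top_iff_ne_top.mpr hC₀top)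
  have hv2 : ∫⁻ p in Set.Ioc a b ×ˢ Set.Ioc a b,
      (‖v p.2‖₊ : ℝ≥0∞)^2 * ENNReal.ofReal (|p.2 - p.1| ^ s)
      ∂(volume : Measure (ℝ × ℝ)) < ⊤ := by
    rw [hrp, lintegral_prod_symm _ hmv.aemeasurable]
    have hinner : ∀ η : ℝ, η ∈ Set.Ioc a b →
        ∫⁻ ξ in Set.Ioc a b, (‖v η‖₊ : ℝ≥0∞)^2 * ENNReal.ofReal (|η - ξ| ^ s)
          ≤ (‖v η‖₊ : ℝ≥0∞)^2 * C₀ := by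
      intro η hη
      rw [lintegral_const_mul' _ _ (by simp)]
      refine mul_le_mul_right ?_ _
      refine le_trans (le_of_eq (lintegral_congr fun ξ => by rw [abs_sub_comm])) ?_
      exact slice_bound hν hab hη
    calc ∫⁻ η in Set.Ioc a b, ∫⁻ ξ in Set.Ioc a b,
          (‖v η‖₊ : ℝ≥0∞)^2 * ENNReal.ofReal (|η - ξ| ^ s)
        ≤ ∫⁻ η in Set.Ioc a b, (‖v η‖₊ : ℝ≥0∞)^2 * C₀ :=
          setLIntegral_mono ((hvm.nnnorm.coe_nnreal_ennreal.pow_const 2).mul_const _) hinner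
      _ ≤ ∫⁻ η, (‖v η‖₊ : ℝ≥0∞)^2 * C₀ := setLIntegral_le_lintegral _ _
      _ = (∫⁻ η, (‖v η‖₊ : ℝ≥0∞)^2) * C₀ := lintegral_mul_const' _ _ hC₀top
      _ < ⊤ := ENNReal.mul_lt_top (sq_lintegral_lt_top hv) (lt_top_iff_ne_top.mpr hC₀top)
  exact ENNReal.add_lt_top.mpr ⟨hu2, hv2⟩


lemma core {ν a b : ℝ} (hν : ν ∈ Set.Ioo (0:ℝ) (1/2)) (hab : a < b)
    {u v : ℝ → ℝ} (hum : Measurable u) (hvm : Measurable v)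
    (hu : MemLp u 2 (volume : Measure ℝ)) (hv : MemLp v 2 (volume : Measure ℝ)) :
    ∫ x in a..b, RLleft ν a u x * RLright ν b v x
      = (1 / Real.Gamma (2*ν)) *
        ∫ p in {p : ℝ × ℝ | a < p.1 ∧ p.1 < p.2 ∧ p.2 ≤ b},
          u p.1 * v p.2 * (p.2 - p.1) ^ (2*ν - 1) ∂(volume : Measure (ℝ × ℝ)) := by
  obtain ⟨hν0, hν2⟩ := hν
  have hν1 : ν < 1 := by linarith
  have hΓν : 0 < Real.Gamma ν := Real.Gamma_pos_of_pos hν0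
  have hΓ2ν : 0 < Real.Gamma (2*ν) := Real.Gamma_pos_of_pos (by linarith)
  set B : ℝ := Real.Gamma ν * Real.Gamma ν / Real.Gamma (2*ν) with hB
  have hB0 : 0 ≤ B := by positivity
  set S : Set (ℝ × ℝ) := {p | a < p.1 ∧ p.1 < p.2 ∧ p.2 ≤ b} with hS
  have hSm : MeasurableSet S := by
    have h1 : MeasurableSet {p : ℝ × ℝ | a < p.1} :=
      measurableSet_lt measurable_const measurable_fst
    have h2 : MeasurableSet {p : ℝ × ℝ | p.1 < p.2} :=
      measurableSet_lt measurable_fst measurable_snd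
    have h3 : MeasurableSet {p : ℝ × ℝ | p.2 ≤ b} :=
      measurableSet_le measurable_snd measurable_const
    rw [hS, show {p : ℝ × ℝ | a < p.1 ∧ p.1 < p.2 ∧ p.2 ≤ b}
      = {p : ℝ × ℝ | a < p.1} ∩ ({p : ℝ × ℝ | p.1 < p.2} ∩ {p : ℝ × ℝ | p.2 ≤ b}) by
        ext p; simp [Set.mem_setOf_eq, Set.mem_inter_iff, and_assoc]]
    exact h1.inter (h2.inter h3)
  classical
  set G : ℝ → ℝ × ℝ → ℝ := fun x p =>
    if a < p.1 ∧ p.1 ≤ x ∧ x < p.2 ∧ p.2 ≤ b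
    then u p.1 * v p.2 * ((x - p.1) ^ (ν-1) * (p.2 - x) ^ (ν-1)) else 0 with hG
  -- measurability
  have hrm : Measurable fun t : ℝ => t ^ (ν - 1) := by measurability
  have hGm : Measurable (Function.uncurry G) := by
    have hcond : MeasurableSet {q : ℝ × ℝ × ℝ | a < q.2.1 ∧ q.2.1 ≤ q.1 ∧ q.1 < q.2.2 ∧ q.2.2 ≤ b} := by
      have m21 : Measurable fun q : ℝ × ℝ × ℝ => q.2.1 := measurable_fst.comp measurable_snd
      have m22 : Measurable fun q : ℝ × ℝ × ℝ => q.2.2 := measurable_snd.comp measurable_snd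
      have c1 := measurableSet_lt (measurable_const : Measurable fun _ : ℝ × ℝ × ℝ => a) m21
      have c2 := measurableSet_le m21 measurable_fst
      have c3 := measurableSet_lt measurable_fst m22
      have c4 := measurableSet_le m22 (measurable_const : Measurable fun _ : ℝ × ℝ × ℝ => b)
      have : {q : ℝ × ℝ × ℝ | a < q.2.1 ∧ q.2.1 ≤ q.1 ∧ q.1 < q.2.2 ∧ q.2.2 ≤ b}
          = {q : ℝ × ℝ × ℝ | a < q.2.1} ∩ ({q | q.2.1 ≤ q.1} ∩ ({q | q.1 < q.2.2} ∩ {q | q.2.2 ≤ b})) := by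
        ext q; simp [Set.mem_setOf_eq, and_assoc]
      rw [this]
      exact c1.inter (c2.inter (c3.inter c4))
    have m21 : Measurable fun q : ℝ × ℝ × ℝ => q.2.1 := measurable_fst.comp measurable_snd
    have m22 : Measurable fun q : ℝ × ℝ × ℝ => q.2.2 := measurable_snd.comp measurable_snd
    have hf : Measurable fun q : ℝ × ℝ × ℝ =>
        u q.2.1 * v q.2.2 * ((q.1 - q.2.1) ^ (ν-1) * (q.2.2 - q.1) ^ (ν-1)) := by
      refine (((hum.comp m21).mul (hvm.comp m22)).mul ?_)
      exact (hrm.comp (measurable_fst.sub m21)).mul (hrm.comp (m22.sub measurable_fst))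
    exact Measurable.ite hcond hf measurable_const
  -- integrability of uncurry G
  have HG : Integrable (Function.uncurry G)
      ((volume : Measure ℝ).prod (volume : Measure (ℝ × ℝ))) := by
    refine ⟨hGm.aestronglyMeasurable, ?_⟩
    rw [hasFiniteIntegral_iff_norm]
    rw [lintegral_prod_symm _ (hGm.norm.ennreal_ofReal).aemeasurable]
    have claim : ∀ p : ℝ × ℝ, ∫⁻ x, ENNReal.ofReal ‖Function.uncurry G (x, p)‖
        ≤ (Set.Ioc a b ×ˢ Set.Ioc a b).indicator
            (fun p => (‖u p.1‖₊ : ℝ≥0∞) * (‖v p.2‖₊ : ℝ≥0∞)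
              * ENNReal.ofReal (|p.2 - p.1| ^ (2*ν - 1)) * ENNReal.ofReal B) p := by
      intro p
      by_cases hp : a < p.1 ∧ p.1 < p.2 ∧ p.2 ≤ b
      · obtain ⟨hp1, hp2, hp3⟩ := hp
        have hmem : p ∈ Set.Ioc a b ×ˢ Set.Ioc a b :=
          ⟨⟨hp1, le_of_lt (lt_of_lt_of_le hp2 hp3)⟩, ⟨lt_trans hp1 hp2, hp3⟩⟩
        have hfun : (fun x => ENNReal.ofReal ‖Function.uncurry G (x, p)‖)
            = Set.indicator (Set.Ico p.1 p.2)
                (fun x => ENNReal.ofReal ‖u p.1 * v p.2 * ((x - p.1) ^ (ν-1) * (p.2 - x) ^ (ν-1))‖) := by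
          funext x
          rw [Set.indicator_apply]
          by_cases hx : x ∈ Set.Ico p.1 p.2
          · rw [if_pos hx]
            show ENNReal.ofReal ‖G x p‖ = _
            rw [hG]
            simp only []
            rw [if_pos ⟨hp1, hx.1, hx.2, hp3⟩]
          · rw [if_neg hx]
            show ENNReal.ofReal ‖G x p‖ = _
            rw [hG]
            simp only []
            rw [if_neg fun hcond => hx ⟨hcond.2.1, hcond.2.2.1⟩]
            simp
        rw [hfun, lintegral_indicator measurableSet_Ico]
        have hval : ∫⁻ x in Set.Ico p.1 p.2,
            ENNReal.ofReal ‖u p.1 * v p.2 * ((x - p.1) ^ (ν-1) * (p.2 - x) ^ (ν-1))‖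
            = (‖u p.1‖₊ : ℝ≥0∞) * (‖v p.2‖₊ : ℝ≥0∞)
              * ENNReal.ofReal ((p.2 - p.1) ^ (2*ν-1) * B) := by
          have heq : ∀ x ∈ Set.Ico p.1 p.2,
              ENNReal.ofReal ‖u p.1 * v p.2 * ((x - p.1) ^ (ν-1) * (p.2 - x) ^ (ν-1))‖
                = (‖u p.1‖₊ : ℝ≥0∞) * (‖v p.2‖₊ : ℝ≥0∞)
                  * ENNReal.ofReal ((x - p.1) ^ (ν-1) * (p.2 - x) ^ (ν-1)) := by
            intro x hx
            have hk : 0 ≤ (x - p.1) ^ (ν-1) * (p.2 - x) ^ (ν-1) :=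
              mul_nonneg (Real.rpow_nonneg (by linarith [hx.1]) _)
                (Real.rpow_nonneg (by linarith [hx.2]) _)
            rw [ofReal_norm, enorm_eq_nnnorm, nnnorm_mul, nnnorm_mul, ENNReal.coe_mul,
              ENNReal.coe_mul, ← enorm_eq_nnnorm ((x - p.1) ^ (ν-1) * (p.2 - x) ^ (ν-1)), Real.enorm_eq_ofReal hk]
          rw [setLIntegral_congr_fun measurableSet_Ico heq]
          rw [lintegral_const_mul' _ _ (ENNReal.mul_ne_top ENNReal.coe_ne_top ENNReal.coe_ne_top)]
          have hIcoIoc : (volume : Measure ℝ).restrict (Set.Ico p.1 p.2)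
              = (volume : Measure ℝ).restrict (Set.Ioc p.1 p.2) :=
            Measure.restrict_congr_set Ico_ae_eq_Ioc
          rw [hIcoIoc]
          have hInt : IntegrableOn (fun x => (x - p.1) ^ (ν-1) * (p.2 - x) ^ (ν-1))
              (Set.Ioc p.1 p.2) volume :=
            (intervalIntegrable_iff_integrableOn_Ioc_of_le hp2.le).mp
              (kernel_integrable hν0 hν1 hp2)
          have hnn : 0 ≤ᵐ[volume.restrict (Set.Ioc p.1 p.2)]
              fun x => (x - p.1) ^ (ν-1) * (p.2 - x) ^ (ν-1) := by
            filter_upwards [ae_restrict_mem measurableSet_Ioc] with x hx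
            exact mul_nonneg (Real.rpow_nonneg (by linarith [hx.1]) _)
              (Real.rpow_nonneg (by linarith [hx.2]) _)
          rw [← ofReal_integral_eq_lintegral_ofReal hInt hnn]
          rw [← intervalIntegral.integral_of_le hp2.le, kernel_value hν0 hν1 hp2]
        rw [hval, Set.indicator_of_mem hmem]
        apply le_of_eq
        rw [abs_of_pos (by linarith : (0:ℝ) < p.2 - p.1),
          ENNReal.ofReal_mul (Real.rpow_nonneg (by linarith) _)]
        ring
      · have hzero : ∀ x : ℝ, Function.uncurry G (x, p) = 0 := by
          intro x
          show G x p = 0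
          rw [hG]
          simp only []
          rw [if_neg fun hcond => hp ⟨hcond.1, lt_of_le_of_lt hcond.2.1 hcond.2.2.1, hcond.2.2.2⟩]
        simp only [hzero, norm_zero, ENNReal.ofReal_zero, lintegral_zero]
        exact zero_le
    refine lt_of_le_of_lt (lintegral_mono claim) ?_
    rw [lintegral_indicator (measurableSet_Ioc.prod measurableSet_Ioc)]
    rw [lintegral_mul_const' _ _ ENNReal.ofReal_ne_top]
    exact ENNReal.mul_lt_top (master_fin ⟨hν0, hν2⟩ hab hum hvm hu hv) ENNReal.ofReal_lt_top
  -- Step A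
  have stepA : ∫ x in a..b, RLleft ν a u x * RLright ν b v x
      = (1/Real.Gamma ν)^2 * ∫ x in Set.Ioc a b, (∫ p : ℝ × ℝ, G x p) := by
    rw [intervalIntegral.integral_of_le hab.le, ← integral_const_mul]
    refine setIntegral_congr_fun measurableSet_Ioc fun x hx => ?_
    have h1 : RLleft ν a u x = (1/Real.Gamma ν)
        * ∫ ξ, Set.indicator (Set.Ioc a x) (fun ξ => (x - ξ) ^ (ν-1) * u ξ) ξ := by
      rw [RLleft, intervalIntegral.integral_of_le hx.1.le,
        integral_indicator measurableSet_Ioc]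
    have h2 : RLright ν b v x = (1/Real.Gamma ν)
        * ∫ η, Set.indicator (Set.Ioc x b) (fun η => (η - x) ^ (ν-1) * v η) η := by
      rw [RLright, intervalIntegral.integral_of_le hx.2,
        integral_indicator measurableSet_Ioc]
    rw [h1, h2, mul_mul_mul_comm]
    have h3 : (∫ ξ, Set.indicator (Set.Ioc a x) (fun ξ => (x - ξ) ^ (ν-1) * u ξ) ξ)
        * (∫ η, Set.indicator (Set.Ioc x b) (fun η => (η - x) ^ (ν-1) * v η) η)
        = ∫ p : ℝ × ℝ, Set.indicator (Set.Ioc a x) (fun ξ => (x - ξ) ^ (ν-1) * u ξ) p.1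
            * Set.indicator (Set.Ioc x b) (fun η => (η - x) ^ (ν-1) * v η) p.2 := by
      rw [Measure.volume_eq_prod, integral_prod_mul]
    rw [h3]
    have h4 : ∀ p : ℝ × ℝ,
        Set.indicator (Set.Ioc a x) (fun ξ => (x - ξ) ^ (ν-1) * u ξ) p.1
          * Set.indicator (Set.Ioc x b) (fun η => (η - x) ^ (ν-1) * v η) p.2 = G x p := by
      intro p
      rw [Set.indicator_apply, Set.indicator_apply, hG]
      simp only [Set.mem_Ioc]
      split_ifs with h1' h2' h3' h4' h5' h6' h7' <;> try ring
      all_goals tauto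
    rw [integral_congr_ae (Filter.Eventually.of_forall h4)]
    ring
  -- extend x-integral to all of ℝ
  have stepA2 : ∫ x in Set.Ioc a b, (∫ p : ℝ × ℝ, G x p) = ∫ x : ℝ, ∫ p : ℝ × ℝ, G x p := by
    refine setIntegral_eq_integral_of_forall_compl_eq_zero fun x hx => ?_
    have hzero : ∀ p : ℝ × ℝ, G x p = 0 := by
      intro p
      rw [hG]
      simp only []
      rw [if_neg]
      intro hcond
      exact hx ⟨lt_of_lt_of_le hcond.1 hcond.2.1,
        le_trans (le_of_lt hcond.2.2.1) hcond.2.2.2⟩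
    simp only [hzero, integral_zero]
  -- Step B : Fubini
  have stepB : ∫ x : ℝ, ∫ p : ℝ × ℝ, G x p = ∫ p : ℝ × ℝ, ∫ x : ℝ, G x p :=
    integral_integral_swap HG
  -- Step C : inner x-integral
  have stepC : ∀ p : ℝ × ℝ, (∫ x : ℝ, G x p)
      = S.indicator (fun p => u p.1 * v p.2 * (p.2 - p.1) ^ (2*ν - 1) * B) p := by
    intro p
    by_cases hp : p ∈ S
    · rw [hS] at hp
      obtain ⟨hp1, hp2, hp3⟩ := hp
      have hfun : (fun x => G x p) = Set.indicator (Set.Ico p.1 p.2)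
          (fun x => u p.1 * v p.2 * ((x - p.1) ^ (ν-1) * (p.2 - x) ^ (ν-1))) := by
        funext x
        rw [Set.indicator_apply, hG]
        simp only [Set.mem_Ico]
        split_ifs with h1' h2' h3' <;> try rfl
        · exact absurd ⟨h1'.2.1, h1'.2.2.1⟩ h2'
        · exact absurd ⟨hp1, h3'.1, h3'.2, hp3⟩ h1'
      rw [hfun, integral_indicator measurableSet_Ico,
        setIntegral_congr_set Ico_ae_eq_Ioc,
        ← intervalIntegral.integral_of_le hp2.le]
      have : ∫ x in p.1..p.2, u p.1 * v p.2 * ((x - p.1) ^ (ν-1) * (p.2 - x) ^ (ν-1))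
          = (u p.1 * v p.2) * ∫ x in p.1..p.2, (x - p.1) ^ (ν-1) * (p.2 - x) ^ (ν-1) := by
        rw [← intervalIntegral.integral_const_mul]
      rw [this, kernel_value hν0 hν1 hp2, Set.indicator_of_mem (show p ∈ S by rw [hS]; exact ⟨hp1, hp2, hp3⟩)]
      ring
    · have hzero : ∀ x : ℝ, G x p = 0 := by
        intro x
        rw [hG]
        simp only []
        rw [if_neg]
        intro hcond
        refine hp ?_
        rw [hS]
        exact ⟨hcond.1, lt_of_le_of_lt hcond.2.1 hcond.2.2.1, hcond.2.2.2⟩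
      rw [Set.indicator_of_notMem hp]
      simp only [hzero, integral_zero]
  -- assemble
  rw [stepA, stepA2, stepB, integral_congr_ae (Filter.Eventually.of_forall stepC),
    integral_indicator hSm]
  have : ∫ p in S, u p.1 * v p.2 * (p.2 - p.1) ^ (2*ν - 1) * B
      = (∫ p in S, u p.1 * v p.2 * (p.2 - p.1) ^ (2*ν - 1)) * B := by
    rw [← integral_mul_const]
  rw [this, hB]
  rw [hS]
  field_simp


lemma stmt1_meas (ν a b : ℝ) (hν : ν ∈ Set.Ioo (0 : ℝ) (1 / 2)) (hab : a < b)
    (u v : ℝ → ℝ) (hum : Measurable u) (hvm : Measurable v)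
    (hu : MemLp u 2 (volume : Measure ℝ)) (hv : MemLp v 2 (volume : Measure ℝ)) :
    (∫ x in a..b, RLleft ν a u x * RLright ν b v x) +
      (∫ x in a..b, RLleft ν a v x * RLright ν b u x) =
      (1 / Real.Gamma (2 * ν)) *
        ∫ ξ in a..b, ∫ η in a..b, u ξ * v η * |η - ξ| ^ (2 * ν - 1) := by
  obtain ⟨hν0, hν2⟩ := hν
  have hrm : Measurable fun t : ℝ => |t| ^ (2*ν-1) := by measurability
  set s : ℝ := 2*ν - 1 with hs
  set W : ℝ × ℝ → ℝ := fun p => u p.1 * v p.2 * |p.2 - p.1| ^ s with hW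
  have hWm : Measurable W := by
    refine ((hum.comp measurable_fst).mul (hvm.comp measurable_snd)).mul ?_
    exact hrm.comp (measurable_snd.sub measurable_fst)
  set Q : Set (ℝ × ℝ) := Set.Ioc a b ×ˢ Set.Ioc a b with hQ
  have hQm : MeasurableSet Q := measurableSet_Ioc.prod measurableSet_Ioc
  set S : Set (ℝ × ℝ) := {p | a < p.1 ∧ p.1 < p.2 ∧ p.2 ≤ b} with hSdef
  set S' : Set (ℝ × ℝ) := {p | a < p.2 ∧ p.2 < p.1 ∧ p.1 ≤ b} with hS'def
  have hSm : MeasurableSet S := by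
    rw [hSdef, show {p : ℝ × ℝ | a < p.1 ∧ p.1 < p.2 ∧ p.2 ≤ b}
      = {p : ℝ × ℝ | a < p.1} ∩ ({p : ℝ × ℝ | p.1 < p.2} ∩ {p : ℝ × ℝ | p.2 ≤ b}) by
        ext p; simp [Set.mem_setOf_eq, and_assoc]]
    exact (measurableSet_lt measurable_const measurable_fst).inter
      ((measurableSet_lt measurable_fst measurable_snd).inter
        (measurableSet_le measurable_snd measurable_const))
  have hS'm : MeasurableSet S' := by
    rw [hS'def, show {p : ℝ × ℝ | a < p.2 ∧ p.2 < p.1 ∧ p.1 ≤ b}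
      = {p : ℝ × ℝ | a < p.2} ∩ ({p : ℝ × ℝ | p.2 < p.1} ∩ {p : ℝ × ℝ | p.1 ≤ b}) by
        ext p; simp [Set.mem_setOf_eq, and_assoc]]
    exact (measurableSet_lt measurable_const measurable_snd).inter
      ((measurableSet_lt measurable_snd measurable_fst).inter
        (measurableSet_le measurable_fst measurable_const))
  -- integrability of W on Q
  have hWint : IntegrableOn W Q (volume : Measure (ℝ × ℝ)) := by
    refine ⟨hWm.aestronglyMeasurable.restrict, ?_⟩
    have : ∀ p : ℝ × ℝ, (‖W p‖₊ : ℝ≥0∞)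
        = (‖u p.1‖₊ : ℝ≥0∞) * (‖v p.2‖₊ : ℝ≥0∞) * ENNReal.ofReal (|p.2 - p.1| ^ s) := by
      intro p
      rw [hW]
      simp only []
      rw [nnnorm_mul, nnnorm_mul, ENNReal.coe_mul, ENNReal.coe_mul, ← enorm_eq_nnnorm (|p.2 - p.1| ^ s),
        Real.enorm_eq_ofReal (Real.rpow_nonneg (abs_nonneg _) _)]
    rw [HasFiniteIntegral]
    simp only [enorm_eq_nnnorm]
    rw [lintegral_congr this]
    exact master_fin ⟨hν0, hν2⟩ hab hum hvm hu hv
  -- diagonal is null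
  have hDnull : (volume : Measure (ℝ × ℝ)) {p : ℝ × ℝ | p.1 = p.2} = 0 := by
    have hDm : MeasurableSet {p : ℝ × ℝ | p.1 = p.2} :=
      measurableSet_eq_fun measurable_fst measurable_snd
    rw [Measure.volume_eq_prod]
    rw [Measure.measure_prod_null hDm]
    refine Filter.Eventually.of_forall fun x => ?_
    have hpre : (Prod.mk x ⁻¹' {p : ℝ × ℝ | p.1 = p.2}) = {x} := by
      ext y; simp [eq_comm]
    show volume (Prod.mk x ⁻¹' {p : ℝ × ℝ | p.1 = p.2}) = (0 : ℝ → ℝ≥0∞) x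
    rw [hpre]
    simp [measure_singleton]
  -- Q is a.e. equal to S ∪ S'
  have hsub : S ∪ S' ⊆ Q := by
    rintro p (hp | hp)
    · rw [hSdef] at hp
      exact ⟨⟨hp.1, le_of_lt (lt_of_lt_of_le hp.2.1 hp.2.2)⟩, ⟨lt_trans hp.1 hp.2.1, hp.2.2⟩⟩
    · rw [hS'def] at hp
      exact ⟨⟨lt_trans hp.1 hp.2.1, hp.2.2⟩, ⟨hp.1, le_of_lt (lt_of_lt_of_le hp.2.1 hp.2.2)⟩⟩
  have hQae : (S ∪ S' : Set (ℝ × ℝ)) =ᵐ[(volume : Measure (ℝ × ℝ))] Q := by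
    rw [MeasureTheory.ae_eq_set]
    constructor
    · rw [Set.diff_eq_empty.mpr hsub]
      exact measure_empty
    · refine measure_mono_null ?_ hDnull
      intro p hp
      obtain ⟨hpQ, hpn⟩ := hp
      simp only [Set.mem_union] at hpn
      push_neg at hpn
      obtain ⟨hn1, hn2⟩ := hpn
      rw [hSdef] at hn1
      rw [hS'def] at hn2
      simp only [Set.mem_setOf_eq, not_and, not_lt, not_le] at hn1 hn2
      have h1 := hpQ.1.1
      have h2 := hpQ.1.2
      have h3 := hpQ.2.1
      have h4 := hpQ.2.2
      have hA := hn1 h1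
      have hB := hn2 h3
      show p.1 = p.2
      by_contra hne
      rcases lt_or_gt_of_ne hne with h | h
      · exact absurd h4 (not_le.mpr (hA h))
      · exact absurd h2 (not_le.mpr (hB h))
  have hdisj : Disjoint S S' := by
    rw [Set.disjoint_left]
    intro p hp hp'
    rw [hSdef] at hp
    rw [hS'def] at hp'
    exact absurd hp.2.1 (not_lt.mpr (le_of_lt hp'.2.1))
  -- split the square integral
  have hsplitQ : ∫ p in Q, W p ∂(volume : Measure (ℝ × ℝ))
      = (∫ p in S, W p ∂(volume : Measure (ℝ × ℝ)))
        + ∫ p in S', W p ∂(volume : Measure (ℝ × ℝ)) := by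
    rw [← setIntegral_congr_set hQae]
    exact setIntegral_union hdisj hS'm (hWint.mono_set (Set.subset_union_left.trans hsub))
      (hWint.mono_set (Set.subset_union_right.trans hsub))
  -- claim B : on S, the kernel has no abs
  have claimB : ∫ p in S, u p.1 * v p.2 * (p.2 - p.1) ^ s ∂(volume : Measure (ℝ × ℝ))
      = ∫ p in S, W p ∂(volume : Measure (ℝ × ℝ)) := by
    refine setIntegral_congr_fun hSm fun p hp => ?_
    rw [hSdef] at hp
    rw [hW]
    simp only []
    rw [abs_of_pos (by linarith [hp.2.1] : (0:ℝ) < p.2 - p.1)]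
  -- claim A : swap
  have claimA : ∫ p in S, v p.1 * u p.2 * (p.2 - p.1) ^ s ∂(volume : Measure (ℝ × ℝ))
      = ∫ p in S', W p ∂(volume : Measure (ℝ × ℝ)) := by
    rw [← integral_indicator hSm, ← integral_indicator hS'm, Measure.volume_eq_prod,
      ← integral_prod_swap (S'.indicator W)]
    refine integral_congr_ae (Filter.Eventually.of_forall fun z => ?_)
    show S.indicator (fun p => v p.1 * u p.2 * (p.2 - p.1) ^ s) z = S'.indicator W z.swap
    by_cases hz : z ∈ S
    · rw [hSdef] at hz
      have hz' : z.swap ∈ S' := by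
        rw [hS'def]
        exact ⟨hz.1, hz.2.1, hz.2.2⟩
      rw [Set.indicator_of_mem (show z ∈ S by rw [hSdef]; exact hz),
        Set.indicator_of_mem hz']
      rw [hW]
      simp only [Prod.fst_swap, Prod.snd_swap]
      rw [abs_of_neg (by linarith [hz.2.1] : z.1 - z.2 < 0), neg_sub]
      ring
    · have hz' : z.swap ∉ S' := by
        intro hc
        rw [hS'def] at hc
        refine hz ?_
        rw [hSdef]
        exact ⟨hc.1, hc.2.1, hc.2.2⟩
      rw [Set.indicator_of_notMem hz, Set.indicator_of_notMem hz']
  -- claim D : iterated integral over the square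
  have claimD : ∫ ξ in a..b, ∫ η in a..b, u ξ * v η * |η - ξ| ^ s
      = ∫ p in Q, W p ∂(volume : Measure (ℝ × ℝ)) := by
    rw [intervalIntegral.integral_of_le hab.le]
    have h1 : ∀ ξ : ℝ, (∫ η in a..b, u ξ * v η * |η - ξ| ^ s)
        = ∫ η in Set.Ioc a b, u ξ * v η * |η - ξ| ^ s :=
      fun ξ => intervalIntegral.integral_of_le hab.le
    rw [setIntegral_congr_fun measurableSet_Ioc fun ξ _ => h1 ξ]
    have hWint2 : IntegrableOn W (Set.Ioc a b ×ˢ Set.Ioc a b)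
        ((volume : Measure ℝ).prod (volume : Measure ℝ)) := by
      rw [← Measure.volume_eq_prod]
      exact hWint
    rw [hQ, Measure.volume_eq_prod, setIntegral_prod W hWint2]
  -- put everything together
  rw [core ⟨hν0, hν2⟩ hab hum hvm hu hv, core ⟨hν0, hν2⟩ hab hvm hum hv hu,
    ← hSdef, ← mul_add]
  rw [claimB, claimA, ← hsplitQ, claimD]


theorem stmt1 (ν a b : ℝ) (hν : ν ∈ Set.Ioo (0 : ℝ) (1 / 2)) (hab : a < b)
    (u v : ℝ → ℝ)
    (hu : MemLp u 2 (volume : Measure ℝ)) (hv : MemLp v 2 (volume : Measure ℝ))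
    (hu0 : ∀ x, x ∉ Set.Icc a b → u x = 0) (hv0 : ∀ x, x ∉ Set.Icc a b → v x = 0) :
    (∫ x in a..b, RLleft ν a u x * RLright ν b v x) +
      (∫ x in a..b, RLleft ν a v x * RLright ν b u x) =
      (1 / Real.Gamma (2 * ν)) *
        ∫ ξ in a..b, ∫ η in a..b, u ξ * v η * |η - ξ| ^ (2 * ν - 1) := by
  classical
  set u' : ℝ → ℝ := hu.1.mk u with hu'def
  set v' : ℝ → ℝ := hv.1.mk v with hv'def
  have hum : Measurable u' := hu.1.stronglyMeasurable_mk.measurable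
  have hvm : Measurable v' := hv.1.stronglyMeasurable_mk.measurable
  have huae : u =ᵐ[(volume : Measure ℝ)] u' := hu.1.ae_eq_mk
  have hvae : v =ᵐ[(volume : Measure ℝ)] v' := hv.1.ae_eq_mk
  have hu' : MemLp u' 2 (volume : Measure ℝ) := hu.ae_eq huae
  have hv' : MemLp v' 2 (volume : Measure ℝ) := hv.ae_eq hvae
  have hRLu : ∀ x, RLleft ν a u x = RLleft ν a u' x := by
    intro x
    rw [RLleft, RLleft]
    congr 1
    refine intervalIntegral.integral_congr_ae ?_
    filter_upwards [huae] with ξ hξ _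
    rw [hξ]
  have hRLv : ∀ x, RLleft ν a v x = RLleft ν a v' x := by
    intro x
    rw [RLleft, RLleft]
    congr 1
    refine intervalIntegral.integral_congr_ae ?_
    filter_upwards [hvae] with ξ hξ _
    rw [hξ]
  have hRRu : ∀ x, RLright ν b u x = RLright ν b u' x := by
    intro x
    rw [RLright, RLright]
    congr 1
    refine intervalIntegral.integral_congr_ae ?_
    filter_upwards [huae] with ξ hξ _
    rw [hξ]
  have hRRv : ∀ x, RLright ν b v x = RLright ν b v' x := by
    intro x
    rw [RLright, RLright]
    congr 1
    refine intervalIntegral.integral_congr_ae ?_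
    filter_upwards [hvae] with ξ hξ _
    rw [hξ]
  have hL1 : ∫ x in a..b, RLleft ν a u x * RLright ν b v x
      = ∫ x in a..b, RLleft ν a u' x * RLright ν b v' x :=
    intervalIntegral.integral_congr fun x _ => by rw [hRLu x, hRRv x]
  have hL2 : ∫ x in a..b, RLleft ν a v x * RLright ν b u x
      = ∫ x in a..b, RLleft ν a v' x * RLright ν b u' x :=
    intervalIntegral.integral_congr fun x _ => by rw [hRLv x, hRRu x]
  have hRHS : ∫ ξ in a..b, ∫ η in a..b, u ξ * v η * |η - ξ| ^ (2 * ν - 1)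
      = ∫ ξ in a..b, ∫ η in a..b, u' ξ * v' η * |η - ξ| ^ (2 * ν - 1) := by
    refine intervalIntegral.integral_congr_ae ?_
    filter_upwards [huae] with ξ hξ _
    rw [hξ]
    refine intervalIntegral.integral_congr_ae ?_
    filter_upwards [hvae] with η hη _
    rw [hη]
  rw [hL1, hL2, hRHS]
  exact stmt1_meas ν a b hν hab u' v' hum hvm hu' hv'
end

section
/- Let α ∈ (0,1), θ ∈ (π/2, π), and σ ∈ [0,1]. There exists a constant C > 0, depending only on α and θ, such that for every complex number z ≠ 0 with |arg z| ≤ θ and every real λ > 0: λ^σ · |z|^{α-1} / |z^α + λ| ≤ C · |z|^{σα-1}, where z^α = exp(α · Log z) is defined via the principal branch of the logarithm. -/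
set_option maxHeartbeats 1000000


theorem stmt5 (α θ : ℝ) (hα : α ∈ Set.Ioo (0 : ℝ) 1)
    (hθ : θ ∈ Set.Ioo (Real.pi / 2) Real.pi) :
    ∃ C > (0 : ℝ), ∀ σ ∈ Set.Icc (0 : ℝ) 1, ∀ z : ℂ, z ≠ 0 → |z.arg| ≤ θ →
      ∀ lam : ℝ, 0 < lam →
        lam ^ σ * ‖z‖ ^ (α - 1) / ‖z ^ (α : ℂ) + (lam : ℂ)‖ ≤
          C * ‖z‖ ^ (σ * α - 1) := by
  obtain ⟨hα0, hα1⟩ := hα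
  obtain ⟨hθ0, hθ1⟩ := hθ
  have hpi := Real.pi_pos
  have hθpos : 0 < θ := by linarith
  set κ := Real.cos (α * θ) with hκdef
  have hαθ0 : 0 ≤ α * θ := by positivity
  have hαθ : α * θ < Real.pi := by nlinarith
  have hκ1 : -1 < κ := by
    have := Real.cos_lt_cos_of_nonneg_of_le_pi hαθ0 le_rfl hαθ
    rw [Real.cos_pi] at this
    exact this
  have hhalf : 0 < (1 + κ) / 2 := by linarith
  set c := Real.sqrt ((1 + κ) / 2) with hcdef
  have hc : 0 < c := Real.sqrt_pos.mpr hhalf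
  refine ⟨1 / c, by positivity, ?_⟩
  intro σ hσ z hz harg lam hlam
  obtain ⟨hσ0, hσ1⟩ := hσ
  set r := ‖z‖ with hrdef
  have hr : 0 < r := norm_pos_iff.mpr hz
  set t := r ^ α with htdef
  have ht : 0 < t := Real.rpow_pos_of_pos hr α
  -- real and imaginary parts of z^α
  have hre : (z ^ (α : ℂ)).re = t * Real.cos (α * z.arg) := by
    rw [Complex.cpow_def_of_ne_zero hz, Complex.exp_re]
    simp only [Complex.mul_re, Complex.mul_im, Complex.log_re, Complex.log_im,
      Complex.ofReal_re, Complex.ofReal_im, mul_zero, zero_mul, sub_zero, add_zero, zero_add]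
    rw [← Real.rpow_def_of_pos hr, mul_comm z.arg α]
  have him : (z ^ (α : ℂ)).im = t * Real.sin (α * z.arg) := by
    rw [Complex.cpow_def_of_ne_zero hz, Complex.exp_im]
    simp only [Complex.mul_re, Complex.mul_im, Complex.log_re, Complex.log_im,
      Complex.ofReal_re, Complex.ofReal_im, mul_zero, zero_mul, sub_zero, add_zero, zero_add]
    rw [← Real.rpow_def_of_pos hr, mul_comm z.arg α]
  have hcos : κ ≤ Real.cos (α * z.arg) := by
    have h1 : |α * z.arg| ≤ α * θ := by
      rw [abs_mul, abs_of_pos hα0]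
      exact mul_le_mul_of_nonneg_left harg hα0.le
    have := Real.cos_le_cos_of_nonneg_of_le_pi (abs_nonneg (α * z.arg)) hαθ.le h1
    rwa [Real.cos_abs] at this
  have hcos1 : Real.cos (α * z.arg) ≤ 1 := Real.cos_le_one _
  set A := ‖z ^ (α : ℂ) + (lam : ℂ)‖ with hAdef
  have hA0 : 0 ≤ A := norm_nonneg _
  have hA2 : A ^ 2 = t ^ 2 + 2 * lam * t * Real.cos (α * z.arg) + lam ^ 2 := by
    have h1 : A ^ 2 = ((z ^ (α : ℂ)).re + lam) ^ 2 + (z ^ (α : ℂ)).im ^ 2 := by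
      rw [hAdef, Complex.sq_norm, Complex.normSq_apply]
      simp only [Complex.add_re, Complex.add_im, Complex.ofReal_re, Complex.ofReal_im, add_zero]
      ring
    rw [h1, hre, him]
    have hpyth := Real.sin_sq_add_cos_sq (α * z.arg)
    nlinarith [hpyth]
  set M := max t lam with hMdef
  have hMt : t ≤ M := le_max_left _ _
  have hMl : lam ≤ M := le_max_right _ _
  have hM : 0 < M := lt_of_lt_of_le ht hMt
  have hMtl : M ≤ t + lam := max_le (by linarith) (by linarith)
  have hA2ge : (c * M) ^ 2 ≤ A ^ 2 := by
    have hcM : (c * M) ^ 2 = (1 + κ) / 2 * M ^ 2 := by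
      rw [mul_pow, hcdef, Real.sq_sqrt hhalf.le]
    have h1 : (1 + κ) / 2 * M ^ 2 ≤ (1 + κ) / 2 * (t + lam) ^ 2 :=
      mul_le_mul_of_nonneg_left (pow_le_pow_left₀ hM.le hMtl 2) hhalf.le
    have h2 : (1 + κ) / 2 * (t + lam) ^ 2 ≤ A ^ 2 := by
      rw [hA2]
      have e1 : 0 ≤ (1 - κ) * (t - lam) ^ 2 :=
        mul_nonneg (by linarith) (sq_nonneg _)
      have e2 : 0 ≤ lam * t * (Real.cos (α * z.arg) - κ) :=
        mul_nonneg (mul_nonneg hlam.le ht.le) (by linarith)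
      linarith [e1, e2]
    rw [hcM]
    linarith
  have hAc : c * M ≤ A := by
    have h := Real.sqrt_le_sqrt hA2ge
    rwa [Real.sqrt_sq (by positivity), Real.sqrt_sq hA0] at h
  have hApos : 0 < A := lt_of_lt_of_le (mul_pos hc hM) hAc
  rw [div_le_iff₀ hApos]
  have key : lam ^ σ * t ^ (1 - σ) ≤ M := by
    calc lam ^ σ * t ^ (1 - σ)
        ≤ M ^ σ * M ^ (1 - σ) := by
          apply mul_le_mul (Real.rpow_le_rpow hlam.le hMl hσ0)
            (Real.rpow_le_rpow ht.le hMt (by linarith))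
            (Real.rpow_nonneg ht.le _) (Real.rpow_nonneg hM.le _)
      _ = M := by
          rw [← Real.rpow_add hM]
          norm_num
  have hsplit : r ^ (α - 1) = t ^ (1 - σ) * r ^ (σ * α - 1) := by
    have h1 : t ^ (1 - σ) = r ^ (α * (1 - σ)) := by
      rw [Real.rpow_mul hr.le]
    rw [h1, ← Real.rpow_add hr]
    congr 1
    ring
  have hMC : M ≤ 1 / c * A := by
    rw [one_div, inv_mul_eq_div, le_div_iff₀ hc]
    linarith [hAc]
  calc lam ^ σ * r ^ (α - 1)
      = (lam ^ σ * t ^ (1 - σ)) * r ^ (σ * α - 1) := by rw [hsplit]; ring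
    _ ≤ M * r ^ (σ * α - 1) :=
        mul_le_mul_of_nonneg_right key (Real.rpow_nonneg hr.le _)
    _ ≤ (1 / c * A) * r ^ (σ * α - 1) :=
        mul_le_mul_of_nonneg_right hMC (Real.rpow_nonneg hr.le _)
    _ = 1 / c * r ^ (σ * α - 1) * A := by ring
end
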